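/- (Unbiasedness.) In the sequential sensing process described in the context, for every k ∈ {1,…,K} the expected difference between the algorithm's posterior mean and the true posterior mean satisfies E[μ̂_k − μ_k] = M_k M_{k−1} ⋯ M_1 (μ̂ − μ), where M_j = I_n − (β_j λ̂_j/(β_j λ̂_j + σ²)) û_j û_jᵀ. In particular, if the assumed initial mean is accurate, μ̂ = μ, then E[μ̂_k − μ_k] = 0 for all k = 1,…,K. -/

import Mathlib

open MeasureTheory ProbabilityTheory Matrix BigOperators

/-- Spectral (ℓ²-operator) norm of a real square matrix. -/
noncomputable def specNorm {n : ℕ} (A : Matrix (Fin n) (Fin n) ℝ) : ℝ :=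
  ‖LinearMap.toContinuousLinearMap (Matrix.toEuclideanLin A)‖

/-- The standard Gaussian measure on `ℝⁿ` (iid `N(0,1)` coordinates). -/
noncomputable def stdGaussianPi (n : ℕ) : Measure (Fin n → ℝ) :=
  Measure.pi fun _ => gaussianReal 0 1

/-- The square root of a positive semidefinite matrix, as `Matrix.PosSemidef.sqrt` was defined
in older Mathlib. -/
noncomputable def posSemidefSqrt {n : ℕ} {S : Matrix (Fin n) (Fin n) ℝ} (hS : S.PosSemidef) :
    Matrix (Fin n) (Fin n) ℝ :=
  (hS.1.eigenvectorUnitary : Matrix (Fin n) (Fin n) ℝ) *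
    diagonal ((↑) ∘ (√·) ∘ hS.1.eigenvalues) *
    (star hS.1.eigenvectorUnitary : Matrix (Fin n) (Fin n) ℝ)

/-- The multivariate Gaussian measure `N(μ, S)` on `ℝⁿ`, defined as the pushforward of the
standard Gaussian under the affine map `z ↦ μ + S^{1/2} z`. -/
noncomputable def multiGaussian {n : ℕ} (μ : Fin n → ℝ) (S : Matrix (Fin n) (Fin n) ℝ)
    (hS : S.PosSemidef) : Measure (Fin n → ℝ) :=
  (stdGaussianPi n).map fun z => μ + (posSemidefSqrt hS).mulVec z

/-- The chi-squared distribution with `n` degrees of freedom, i.e. the Gamma distribution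
with shape `n/2` and rate `1/2`. -/
noncomputable def chiSqMeasure (n : ℕ) : Measure ℝ := gammaMeasure ((n : ℝ) / 2) (1 / 2)

set_option maxHeartbeats 1000000

section Aux
open scoped NNReal ENNReal
open Real

lemma gauss_integrable_id {v : ℝ≥0} (hv : v ≠ 0) :
    Integrable (id : ℝ → ℝ) (gaussianReal 0 v) := by
  rw [gaussianReal_of_var_ne_zero 0 hv]
  rw [integrable_withDensity_iff (measurable_gaussianPDF 0 v)
    (Filter.Eventually.of_forall fun x => ENNReal.ofReal_lt_top)]
  have hv' : (0:ℝ) < (v:ℝ) := by positivity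
  have hb : (0:ℝ) < (2 * (v:ℝ))⁻¹ := by positivity
  have h := (integrable_mul_exp_neg_mul_sq hb).const_mul (√(2 * π * v))⁻¹
  refine h.congr (Filter.Eventually.of_forall fun x => ?_)
  simp only [gaussianPDF, gaussianPDFReal, ENNReal.toReal_ofReal
    (by positivity : (0:ℝ) ≤ (√(2 * π * v))⁻¹ * rexp (-(x - 0) ^ 2 / (2 * v)))]
  rw [sub_zero, div_eq_inv_mul,
    show (2*(v:ℝ))⁻¹ * -x^2 = -(2*(v:ℝ))⁻¹ * x^2 by ring]
  simp only [id_eq]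
  ring

lemma gauss_integral_id {v : ℝ≥0} (hv : v ≠ 0) :
    ∫ x, x ∂(gaussianReal 0 v) = 0 := by
  have hmap : (gaussianReal 0 v).map (fun x => (-1 : ℝ) * x) = gaussianReal 0 v := by
    rw [gaussianReal_map_const_mul (-1 : ℝ)]
    norm_num
  have h1 : ∫ x, (id x : ℝ) ∂((gaussianReal 0 v).map (fun x => (-1:ℝ) * x))
      = ∫ x, (-1 : ℝ) * x ∂(gaussianReal 0 v) :=
    integral_map (by fun_prop) aestronglyMeasurable_id
  rw [hmap] at h1
  simp only [id] at h1
  rw [integral_const_mul] at h1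
  linarith

instance (n : ℕ) : IsProbabilityMeasure (stdGaussianPi n) := by
  unfold stdGaussianPi; infer_instance

lemma stdGaussianPi_map_eval {n : ℕ} (i : Fin n) :
    (stdGaussianPi n).map (fun z => z i) = gaussianReal 0 1 := by
  ext s hs
  rw [Measure.map_apply (measurable_pi_apply i) hs]
  unfold stdGaussianPi
  rw [show (fun z : Fin n → ℝ => z i) ⁻¹' s
      = Set.pi Set.univ (Function.update (fun _ => Set.univ) i s) by
    rw [Set.eval_preimage]]
  rw [Measure.pi_pi]
  rw [Finset.prod_eq_single i (fun j _ hj => by simp [Function.update_of_ne hj])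
    (by simp)]
  simp

lemma eval_integrable {n : ℕ} (i : Fin n) :
    Integrable (fun z : Fin n → ℝ => z i) (stdGaussianPi n) := by
  have h : Integrable (id : ℝ → ℝ) ((stdGaussianPi n).map (fun z => z i)) := by
    rw [stdGaussianPi_map_eval i]; exact gauss_integrable_id one_ne_zero
  exact (integrable_map_measure aestronglyMeasurable_id
    (measurable_pi_apply i).aemeasurable).mp h

lemma eval_integral {n : ℕ} (i : Fin n) :
    ∫ z, z i ∂(stdGaussianPi n) = 0 := by
  have h : ∫ x, (id x : ℝ) ∂((stdGaussianPi n).map (fun z => z i))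
      = ∫ z, z i ∂(stdGaussianPi n) :=
    integral_map (measurable_pi_apply i).aemeasurable aestronglyMeasurable_id
  rw [stdGaussianPi_map_eval i] at h
  simp only [id_eq] at h
  rw [← h]
  exact gauss_integral_id one_ne_zero

lemma id_integrable_std {n : ℕ} :
    Integrable (fun z : Fin n → ℝ => z) (stdGaussianPi n) := by
  refine Integrable.mono' (g := fun z => ∑ i, |z i|)
    (integrable_finset_sum _ fun i _ => (eval_integrable i).abs)
    measurable_id.aestronglyMeasurable
    (Filter.Eventually.of_forall fun z => ?_)
  refine (pi_norm_le_iff_of_nonneg (by positivity)).mpr fun i => ?_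
  calc ‖z i‖ = |z i| := rfl
  _ ≤ ∑ j, |z j| := Finset.single_le_sum (f := fun j => |z j|) (fun j _ => abs_nonneg _) (Finset.mem_univ i)

lemma id_integral_std {n : ℕ} :
    ∫ z, z ∂(stdGaussianPi n) = (0 : Fin n → ℝ) := by
  funext i
  have h := (ContinuousLinearMap.proj (R := ℝ) (φ := fun _ : Fin n => ℝ) i).integral_comp_comm
    id_integrable_std
  simp only [ContinuousLinearMap.proj_apply] at h
  rw [Pi.zero_apply, ← h, eval_integral i]

noncomputable def mulVecCLM {n : ℕ} (A : Matrix (Fin n) (Fin n) ℝ) :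
    (Fin n → ℝ) →L[ℝ] (Fin n → ℝ) :=
  LinearMap.toContinuousLinearMap A.mulVecLin

@[simp] lemma mulVecCLM_apply {n : ℕ} (A : Matrix (Fin n) (Fin n) ℝ) (v : Fin n → ℝ) :
    mulVecCLM A v = A.mulVec v := rfl

noncomputable def dotCLM {n : ℕ} (v : Fin n → ℝ) : (Fin n → ℝ) →L[ℝ] ℝ :=
  LinearMap.toContinuousLinearMap
    { toFun := fun u => v ⬝ᵥ u
      map_add' := fun a b => dotProduct_add v a b
      map_smul' := fun c a => by simp [dotProduct_smul, smul_eq_mul] }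

@[simp] lemma dotCLM_apply {n : ℕ} (v u : Fin n → ℝ) : dotCLM v u = v ⬝ᵥ u := rfl

lemma dot_integrable {n : ℕ} {Ω : Type} [MeasurableSpace Ω] {P : Measure Ω}
    {f : Ω → Fin n → ℝ} (hf : Integrable f P) (v : Fin n → ℝ) :
    Integrable (fun ω => v ⬝ᵥ f ω) P := by
  simpa using (dotCLM v).integrable_comp hf

lemma dot_integral {n : ℕ} {Ω : Type} [MeasurableSpace Ω] {P : Measure Ω}
    {f : Ω → Fin n → ℝ} (hf : Integrable f P) (v : Fin n → ℝ) :
    ∫ ω, v ⬝ᵥ f ω ∂P = v ⬝ᵥ ∫ ω, f ω ∂P := by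
  simpa using (dotCLM v).integral_comp_comm hf

section MG
variable {n : ℕ} (μ : Fin n → ℝ) (S : Matrix (Fin n) (Fin n) ℝ) (hS : S.PosSemidef)

lemma mg_affine_eq : (fun z : Fin n → ℝ => μ + (posSemidefSqrt hS).mulVec z)
    = fun z => μ + mulVecCLM (posSemidefSqrt hS) z := by funext z; simp

lemma mg_affine_meas : Measurable (fun z : Fin n → ℝ => μ + (posSemidefSqrt hS).mulVec z) := by
  rw [mg_affine_eq]
  exact measurable_const.add (mulVecCLM (posSemidefSqrt hS)).continuous.measurable

lemma mg_affine_integrable :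
    Integrable (fun z : Fin n → ℝ => μ + (posSemidefSqrt hS).mulVec z) (stdGaussianPi n) := by
  rw [mg_affine_eq]
  exact (integrable_const μ).add ((mulVecCLM (posSemidefSqrt hS)).integrable_comp id_integrable_std)

lemma mg_integrable_id : Integrable (id : (Fin n → ℝ) → (Fin n → ℝ)) (multiGaussian μ S hS) := by
  unfold multiGaussian
  exact (integrable_map_measure aestronglyMeasurable_id
    (mg_affine_meas μ S hS).aemeasurable).mpr (mg_affine_integrable μ S hS)

lemma mg_integral_id : ∫ z, z ∂(multiGaussian μ S hS) = μ := by
  unfold multiGaussian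
  rw [show (fun z : Fin n → ℝ => z) = id from rfl]
  rw [integral_map (mg_affine_meas μ S hS).aemeasurable aestronglyMeasurable_id]
  simp only [id_eq]
  rw [mg_affine_eq]
  rw [integral_add (integrable_const μ) ((mulVecCLM (posSemidefSqrt hS)).integrable_comp id_integrable_std)]
  rw [integral_const, (mulVecCLM (posSemidefSqrt hS)).integral_comp_comm id_integrable_std,
    id_integral_std, map_zero]
  simp

end MG

lemma vecMulVec_mulVec' {n : ℕ} (u v w : Fin n → ℝ) :
    (Matrix.vecMulVec u v) *ᵥ w = (v ⬝ᵥ w) • u := by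
  funext i
  simp only [Matrix.mulVec, Matrix.vecMulVec_apply, dotProduct, Pi.smul_apply, smul_eq_mul]
  rw [Finset.sum_mul]
  congr 1; funext j; ring

end Aux

/-- Unbiasedness. In the sequential Info-Greedy sensing process with
assumed covariance `Shat` (eigenpairs `(lamhat k, uhat k)` used at step `k`) and true
covariance `S`, the expected difference between the algorithm's posterior mean and the true
posterior mean after `k` measurements is `M_k ⋯ M_1 (μ̂ − μ)`, where
`M_j = I − (β_j λ̂_j/(β_j λ̂_j + σ²)) û_j û_jᵀ`.  In particular, if `μ̂ = μ` the estimator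
is unbiased at every step. -/
theorem stmt3 {n K : ℕ} (σ : ℝ) (hσ : 0 < σ)
    (S Shat : Matrix (Fin n) (Fin n) ℝ) (hS : S.PosSemidef) (hShat : Shat.PosSemidef)
    (μ μhat : Fin n → ℝ)
    {Ω : Type} [MeasurableSpace Ω] (P : Measure Ω) [IsProbabilityMeasure P]
    (x : Ω → Fin n → ℝ) (w : Fin K → Ω → ℝ)
    (hxmeas : Measurable x) (hwmeas : ∀ k, Measurable (w k))
    (hxlaw : P.map x = multiGaussian μ S hS)
    (hwlaw : ∀ k, P.map (w k) = gaussianReal 0 ⟨σ ^ 2, sq_nonneg σ⟩)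
    (hwindep : iIndepFun w P)
    (hxw : IndepFun x (fun ω k => w k ω) P)
    -- deterministic data of the algorithm
    (lamhat : ℕ → ℝ) (uhat : ℕ → Fin n → ℝ) (β : ℕ → ℝ) (a : ℕ → Fin n → ℝ)
    (Shatseq Sseq : ℕ → Matrix (Fin n) (Fin n) ℝ)
    (μhatseq μseq : ℕ → Ω → Fin n → ℝ)
    (y : ℕ → Ω → ℝ)
    (hβ : ∀ k, 0 ≤ β k) (hlam : ∀ k, 0 ≤ lamhat k)
    (hunit : ∀ k, uhat k ⬝ᵥ uhat k = 1)
    (ha : ∀ k, a k = Real.sqrt (β k) • uhat k)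
    (hShat0 : Shatseq 0 = Shat) (hS0 : Sseq 0 = S)
    (hμhat0 : μhatseq 0 = fun _ => μhat) (hμ0 : μseq 0 = fun _ => μ)
    -- at step k+1 (1-based index k+1 ≤ K) we measure along an eigenvector of `Shatseq k`
    (heig : ∀ k (_ : k < K),
      (Shatseq k).mulVec (uhat (k + 1)) = lamhat (k + 1) • uhat (k + 1))
    (hy : ∀ k (hk : k < K), y (k + 1) = fun ω => a (k + 1) ⬝ᵥ x ω + w ⟨k, hk⟩ ω)
    (hShatrec : ∀ k (_ : k < K), Shatseq (k + 1) = Shatseq k -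
      (β (k + 1) * lamhat (k + 1) + σ ^ 2)⁻¹ •
        Matrix.vecMulVec ((Shatseq k).mulVec (a (k + 1))) ((a (k + 1)) ᵥ* Shatseq k))
    (hμhatrec : ∀ k (_ : k < K), μhatseq (k + 1) = fun ω => μhatseq k ω +
      ((β (k + 1) * lamhat (k + 1) + σ ^ 2)⁻¹ * (y (k + 1) ω - a (k + 1) ⬝ᵥ μhatseq k ω)) •
        (Shatseq k).mulVec (a (k + 1)))
    (hSrec : ∀ k (_ : k < K), Sseq (k + 1) = Sseq k -
      (a (k + 1) ⬝ᵥ (Sseq k).mulVec (a (k + 1)) + σ ^ 2)⁻¹ •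
        Matrix.vecMulVec ((Sseq k).mulVec (a (k + 1))) ((a (k + 1)) ᵥ* Sseq k))
    (hμrec : ∀ k (_ : k < K), μseq (k + 1) = fun ω => μseq k ω +
      ((a (k + 1) ⬝ᵥ (Sseq k).mulVec (a (k + 1)) + σ ^ 2)⁻¹ *
        (y (k + 1) ω - a (k + 1) ⬝ᵥ μseq k ω)) • (Sseq k).mulVec (a (k + 1))) :
    (∀ k, 1 ≤ k → k ≤ K →
      (∫ ω, (μhatseq k ω - μseq k ω) ∂P) =
        (((List.range k).map (fun j =>
          (1 : Matrix (Fin n) (Fin n) ℝ) -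
            (β (j + 1) * lamhat (j + 1) / (β (j + 1) * lamhat (j + 1) + σ ^ 2)) •
              Matrix.vecMulVec (uhat (j + 1)) (uhat (j + 1)))).reverse.prod).mulVec
          (μhat - μ)) ∧
    (μhat = μ → ∀ k, 1 ≤ k → k ≤ K →
      (∫ ω, (μhatseq k ω - μseq k ω) ∂P) = 0) := by
  classical
  -- basic integrability and means
  have hx_int : Integrable x P := by
    have h0 : Integrable (id : (Fin n → ℝ) → _) (P.map x) := by
      rw [hxlaw]; exact mg_integrable_id μ S hS
    have := (integrable_map_measure aestronglyMeasurable_id hxmeas.aemeasurable).mp h0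
    simpa [Function.comp] using this
  have hx_mean : ∫ ω, x ω ∂P = μ := by
    have h0 : ∫ z, (id z : Fin n → ℝ) ∂(P.map x) = ∫ ω, x ω ∂P :=
      integral_map hxmeas.aemeasurable aestronglyMeasurable_id
    rw [hxlaw] at h0
    rw [← h0]
    exact mg_integral_id μ S hS
  have hvne : (⟨σ ^ 2, sq_nonneg σ⟩ : NNReal) ≠ 0 := by
    intro h
    have : σ ^ 2 = 0 := congrArg NNReal.toReal h
    nlinarith
  have hw_int : ∀ kk : Fin K, Integrable (w kk) P := by
    intro kk
    have h0 : Integrable (id : ℝ → ℝ) (P.map (w kk)) := by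
      rw [hwlaw kk]; exact gauss_integrable_id hvne
    have := (integrable_map_measure aestronglyMeasurable_id (hwmeas kk).aemeasurable).mp h0
    simpa [Function.comp] using this
  have hw_mean : ∀ kk : Fin K, ∫ ω, w kk ω ∂P = 0 := by
    intro kk
    have h0 : ∫ z, (id z : ℝ) ∂(P.map (w kk)) = ∫ ω, w kk ω ∂P :=
      integral_map (hwmeas kk).aemeasurable aestronglyMeasurable_id
    rw [hwlaw kk] at h0
    rw [← h0]
    exact gauss_integral_id hvne
  -- the main induction
  have key : ∀ k, k ≤ K → Integrable (μhatseq k) P ∧ Integrable (μseq k) P ∧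
      (∫ ω, μseq k ω ∂P) = μ ∧
      (∫ ω, μhatseq k ω ∂P) =
        (((List.range k).map (fun j =>
          (1 : Matrix (Fin n) (Fin n) ℝ) -
            (β (j + 1) * lamhat (j + 1) / (β (j + 1) * lamhat (j + 1) + σ ^ 2)) •
              Matrix.vecMulVec (uhat (j + 1)) (uhat (j + 1)))).reverse.prod).mulVec
          (μhat - μ) + μ := by
    intro k
    induction k with
    | zero =>
      intro _
      rw [hμhat0, hμ0]
      refine ⟨integrable_const _, integrable_const _, by simp, ?_⟩
      simp
    | succ k ih =>
      intro hk1
      have hk : k < K := hk1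
      obtain ⟨ih1, ih2, ih3, ih4⟩ := ih (le_of_lt hk)
      set f : ℕ → Matrix (Fin n) (Fin n) ℝ := fun j =>
        (1 : Matrix (Fin n) (Fin n) ℝ) -
          (β (j + 1) * lamhat (j + 1) / (β (j + 1) * lamhat (j + 1) + σ ^ 2)) •
            Matrix.vecMulVec (uhat (j + 1)) (uhat (j + 1)) with hf
      set m : Fin n → ℝ := (((List.range k).map f).reverse.prod).mulVec (μhat - μ) with hm
      have hPsucc : ((List.range (k + 1)).map f).reverse.prod
          = f k * ((List.range k).map f).reverse.prod := by
        rw [List.range_succ]; simp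
      have hden : β (k + 1) * lamhat (k + 1) + σ ^ 2 ≠ 0 :=
        ne_of_gt (add_pos_of_nonneg_of_pos (mul_nonneg (hβ _) (hlam _)) (pow_pos hσ 2))
      -- y integrability and mean
      have hy_int : Integrable (y (k + 1)) P := by
        rw [hy k hk]; exact (dot_integrable hx_int (a (k + 1))).add (hw_int ⟨k, hk⟩)
      have hy_mean : ∫ ω, y (k + 1) ω ∂P = a (k + 1) ⬝ᵥ μ := by
        rw [hy k hk]
        rw [integral_add (dot_integrable hx_int (a (k + 1))) (hw_int ⟨k, hk⟩)]
        rw [dot_integral hx_int, hx_mean, hw_mean ⟨k, hk⟩, add_zero]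
      -- true posterior mean step
      have hg2_int : Integrable (fun ω =>
          ((a (k + 1) ⬝ᵥ (Sseq k).mulVec (a (k + 1)) + σ ^ 2)⁻¹ *
            (y (k + 1) ω - a (k + 1) ⬝ᵥ μseq k ω))) P :=
        (hy_int.sub (dot_integrable ih2 (a (k + 1)))).const_mul _
      have h2_int : Integrable (μseq (k + 1)) P := by
        rw [hμrec k hk]
        exact ih2.add (hg2_int.smul_const _)
      have h2_mean : ∫ ω, μseq (k + 1) ω ∂P = μ := by
        rw [hμrec k hk]
        rw [integral_add ih2 (hg2_int.smul_const _), integral_smul_const, ih3]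
        rw [integral_const_mul, integral_sub hy_int (dot_integrable ih2 (a (k + 1))),
          hy_mean, dot_integral ih2, ih3]
        simp
      -- algorithm posterior mean step
      have hg1_int : Integrable (fun ω =>
          ((β (k + 1) * lamhat (k + 1) + σ ^ 2)⁻¹ *
            (y (k + 1) ω - a (k + 1) ⬝ᵥ μhatseq k ω))) P :=
        (hy_int.sub (dot_integrable ih1 (a (k + 1)))).const_mul _
      have h1_int : Integrable (μhatseq (k + 1)) P := by
        rw [hμhatrec k hk]
        exact ih1.add (hg1_int.smul_const _)
      have h1_mean : ∫ ω, μhatseq (k + 1) ω ∂P =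
          (((List.range (k + 1)).map f).reverse.prod).mulVec (μhat - μ) + μ := by
        rw [hμhatrec k hk]
        rw [integral_add ih1 (hg1_int.smul_const _), integral_smul_const]
        rw [integral_const_mul, integral_sub hy_int (dot_integrable ih1 (a (k + 1))),
          hy_mean, dot_integral ih1, ih4]
        rw [hPsucc, ← Matrix.mulVec_mulVec, ← hm]
        -- now pure algebra
        have hβs : Real.sqrt (β (k + 1)) * Real.sqrt (β (k + 1)) = β (k + 1) :=
          Real.mul_self_sqrt (hβ _)
        have hv1 : (Shatseq k) *ᵥ (a (k + 1))
            = (Real.sqrt (β (k + 1)) * lamhat (k + 1)) • uhat (k + 1) := by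
          rw [ha, Matrix.mulVec_smul, heig k hk, smul_smul]
        have ham : ∀ z : Fin n → ℝ, a (k + 1) ⬝ᵥ z
            = Real.sqrt (β (k + 1)) * (uhat (k + 1) ⬝ᵥ z) := by
          intro z; rw [ha, smul_dotProduct, smul_eq_mul]
        have hM : (f k) *ᵥ m = m +
            (-(β (k + 1) * lamhat (k + 1) / (β (k + 1) * lamhat (k + 1) + σ ^ 2) *
              (uhat (k + 1) ⬝ᵥ m))) • uhat (k + 1) := by
          rw [hf]
          rw [Matrix.sub_mulVec, Matrix.one_mulVec, Matrix.smul_mulVec,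
            vecMulVec_mulVec', smul_smul, sub_eq_add_neg, ← neg_smul]
        rw [hM, hv1, dotProduct_add, ham, ham, smul_smul]
        have hsc : (β (k + 1) * lamhat (k + 1) + σ ^ 2)⁻¹ *
            (Real.sqrt (β (k + 1)) * (uhat (k + 1) ⬝ᵥ μ) -
              (Real.sqrt (β (k + 1)) * (uhat (k + 1) ⬝ᵥ m) +
               Real.sqrt (β (k + 1)) * (uhat (k + 1) ⬝ᵥ μ))) *
            (Real.sqrt (β (k + 1)) * lamhat (k + 1))
            = -(β (k + 1) * lamhat (k + 1) / (β (k + 1) * lamhat (k + 1) + σ ^ 2) *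
              (uhat (k + 1) ⬝ᵥ m)) := by
          linear_combination (-((β (k + 1) * lamhat (k + 1) + σ ^ 2)⁻¹ * lamhat (k + 1) *
            (uhat (k + 1) ⬝ᵥ m))) * hβs
        rw [hsc]
        abel
      exact ⟨h1_int, h2_int, h2_mean, h1_mean⟩
  constructor
  · intro k h1 hk
    obtain ⟨k1, k2, k3, k4⟩ := key k hk
    rw [integral_sub k1 k2, k3, k4, add_sub_cancel_right]
  · intro heq k h1 hk
    obtain ⟨k1, k2, k3, k4⟩ := key k hk
    rw [integral_sub k1 k2, k3, k4, heq]
    simp
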